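/- For positive integers ℓ_1, ℓ_2, the characteristic polynomial of the real hyperplane arrangement 𝒜_{ℓ_1,ℓ_2,1} in ℝ^{ℓ_1+ℓ_2+1} with hyperplanes x_i + y_j + z_1 = 0 (1 ≤ i ≤ ℓ_1, 1 ≤ j ≤ ℓ_2), x_{i_1} = x_{i_2} (i_1 < i_2), and y_{j_1} = y_{j_2} (j_1 < j_2) equals t^2(t−1)(t−2)⋯(t−(ℓ_1+ℓ_2−1)); consequently the number of chambers is (ℓ_1+ℓ_2)!. -/

import Mathlib

/-- Index type of the hyperplanes of the arrangement `𝒜_{ℓ₁,ℓ₂,1}`: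
hyperplanes `x_i + y_j + z = 0`, `x_{i₁} = x_{i₂}` and `y_{j₁} = y_{j₂}`. -/
abbrev Idx16 (ℓ₁ ℓ₂ : ℕ) :=
  (Fin ℓ₁ × Fin ℓ₂) ⊕ {q : Fin ℓ₁ × Fin ℓ₁ // q.1 < q.2} ⊕ {q : Fin ℓ₂ × Fin ℓ₂ // q.1 < q.2}

/-- Coordinates of the ambient space `ℝ^{ℓ₁+ℓ₂+1}`: the `x`-coordinates, the
`y`-coordinates and the single `z`-coordinate. -/
abbrev Coord16 (ℓ₁ ℓ₂ : ℕ) := Fin ℓ₁ ⊕ Fin ℓ₂ ⊕ Unit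

/-- The hyperplane with coefficient (co)vector `c`. -/
noncomputable def hyp16 (ℓ₁ ℓ₂ : ℕ) (c : Coord16 ℓ₁ ℓ₂ → ℝ) :
    Submodule ℝ (Coord16 ℓ₁ ℓ₂ → ℝ) :=
  LinearMap.ker (∑ s, c s • (LinearMap.proj s : (Coord16 ℓ₁ ℓ₂ → ℝ) →ₗ[ℝ] ℝ))

/-- The hyperplanes of the arrangement `𝒜_{ℓ₁,ℓ₂,1}`. -/
noncomputable def H16 (ℓ₁ ℓ₂ : ℕ) : Idx16 ℓ₁ ℓ₂ → Submodule ℝ (Coord16 ℓ₁ ℓ₂ → ℝ)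
  | Sum.inl q => hyp16 ℓ₁ ℓ₂
      (Pi.single (Sum.inl q.1) 1 + Pi.single (Sum.inr (Sum.inl q.2)) 1 +
        Pi.single (Sum.inr (Sum.inr ())) 1)
  | Sum.inr (Sum.inl q) => hyp16 ℓ₁ ℓ₂
      (Pi.single (Sum.inl q.1.1) 1 - Pi.single (Sum.inl q.1.2) 1)
  | Sum.inr (Sum.inr q) => hyp16 ℓ₁ ℓ₂
      (Pi.single (Sum.inr (Sum.inl q.1.1)) 1 - Pi.single (Sum.inr (Sum.inl q.1.2)) 1)

/-- The intersection poset `L(𝒜)`: all intersections of subfamilies of hyperplanes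
(the empty intersection being the whole space). -/
noncomputable def L16 (ℓ₁ ℓ₂ : ℕ) : Finset (Submodule ℝ (Coord16 ℓ₁ ℓ₂ → ℝ)) :=
  letI := Classical.decEq (Submodule ℝ (Coord16 ℓ₁ ℓ₂ → ℝ))
  Finset.image (fun S : Finset (Idx16 ℓ₁ ℓ₂) => ⨅ i ∈ S, H16 ℓ₁ ℓ₂ i) Finset.univ


open Function

namespace ER16

abbrev Coord (ℓ₁ ℓ₂ : ℕ) := Fin ℓ₁ ⊕ Fin ℓ₂ ⊕ Unit
abbrev K (ℓ₁ ℓ₂ : ℕ) := Fin ℓ₁ ⊕ Fin ℓ₂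

variable {ℓ₁ ℓ₂ : ℕ}

def ι : K ℓ₁ ℓ₂ → Coord ℓ₁ ℓ₂
  | .inl i => .inl i
  | .inr j => .inr (.inl j)

lemma ι_inj : Injective (ι (ℓ₁ := ℓ₁) (ℓ₂ := ℓ₂)) := by
  rintro (i | j) (i' | j') h <;> simp [ι] at h <;> simp [h]

def zc : Coord ℓ₁ ℓ₂ := .inr (.inr ())

/-- The coordinate change `(x, y, z) ↦ (x, -y-z, z)`. -/
def T : (Coord ℓ₁ ℓ₂ → ℝ) → (Coord ℓ₁ ℓ₂ → ℝ) := fun v c =>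
  match c with
  | .inl i => v (.inl i)
  | .inr (.inl j) => -v (.inr (.inl j)) - v (.inr (.inr ()))
  | .inr (.inr _) => v (.inr (.inr ()))

lemma T_invol : Involutive (T (ℓ₁ := ℓ₁) (ℓ₂ := ℓ₂)) := by
  intro v; funext c
  rcases c with i | j | u
  · rfl
  · simp [T]
  · rcases u with ⟨⟩; rfl

def Tlin : (Coord ℓ₁ ℓ₂ → ℝ) →ₗ[ℝ] (Coord ℓ₁ ℓ₂ → ℝ) where
  toFun := T
  map_add' v w := by funext c; rcases c with i | j | u <;> simp [T] <;> ring
  map_smul' a v := by funext c; rcases c with i | j | u <;> simp [T] <;> ring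

noncomputable def φ : (Coord ℓ₁ ℓ₂ → ℝ) ≃ₗ[ℝ] (Coord ℓ₁ ℓ₂ → ℝ) :=
  LinearEquiv.ofInvolutive Tlin T_invol

@[simp] lemma φ_apply (v : Coord ℓ₁ ℓ₂ → ℝ) : φ v = T v := rfl

/-- The pair of coordinates appearing in each hyperplane. -/
def toPair : Idx16 ℓ₁ ℓ₂ → K ℓ₁ ℓ₂ × K ℓ₁ ℓ₂
  | .inl q => (.inl q.1, .inr q.2)
  | .inr (.inl q) => (.inl q.1.1, .inl q.1.2)
  | .inr (.inr q) => (.inr q.1.1, .inr q.1.2)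

lemma toPair_ne (idx : Idx16 ℓ₁ ℓ₂) : (toPair idx).1 ≠ (toPair idx).2 := by
  rcases idx with q | q | q
  · simp [toPair]
  · simp [toPair]; exact fun h => absurd (h ▸ q.2) (lt_irrefl _)
  · simp [toPair]; exact fun h => absurd (h ▸ q.2) (lt_irrefl _)

lemma pair_covered {a b : K ℓ₁ ℓ₂} (h : a ≠ b) :
    ∃ idx : Idx16 ℓ₁ ℓ₂, toPair idx = (a, b) ∨ toPair idx = (b, a) := by
  rcases a with i | j <;> rcases b with i' | j'
  · rcases lt_or_gt_of_ne (fun hh : i = i' => h (congrArg Sum.inl hh)) with hl | hl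
    · exact ⟨.inr (.inl ⟨(i, i'), hl⟩), Or.inl rfl⟩
    · exact ⟨.inr (.inl ⟨(i', i), hl⟩), Or.inr rfl⟩
  · exact ⟨.inl (i, j'), Or.inl rfl⟩
  · exact ⟨.inl (i', j), Or.inr rfl⟩
  · rcases lt_or_gt_of_ne (fun hh : j = j' => h (congrArg Sum.inr hh)) with hl | hl
    · exact ⟨.inr (.inr ⟨(j, j'), hl⟩), Or.inl rfl⟩
    · exact ⟨.inr (.inr ⟨(j', j), hl⟩), Or.inr rfl⟩

lemma mem_hyp16 (c v : Coord ℓ₁ ℓ₂ → ℝ) :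
    v ∈ hyp16 ℓ₁ ℓ₂ c ↔ ∑ s, c s * v s = 0 := by
  simp [hyp16, LinearMap.mem_ker, LinearMap.sum_apply]

lemma sum_single_mul (p : Coord ℓ₁ ℓ₂) (v : Coord ℓ₁ ℓ₂ → ℝ) :
    ∑ s : Coord ℓ₁ ℓ₂, (Pi.single p 1 : Coord ℓ₁ ℓ₂ → ℝ) s * v s = v p := by
  simp [Pi.single_apply, ite_mul]

lemma mem_H16 (idx : Idx16 ℓ₁ ℓ₂) (v : Coord ℓ₁ ℓ₂ → ℝ) :
    v ∈ H16 ℓ₁ ℓ₂ idx ↔ φ v (ι (toPair idx).1) = φ v (ι (toPair idx).2) := by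
  rcases idx with q | q | q
  · rw [H16, mem_hyp16]
    simp only [Pi.add_apply, add_mul, Finset.sum_add_distrib, sum_single_mul]
    simp only [toPair, φ_apply, T, ι]
    constructor <;> intro h <;> linarith
  · rw [H16, mem_hyp16]
    simp only [Pi.sub_apply, sub_mul, Finset.sum_sub_distrib, sum_single_mul]
    simp only [toPair, φ_apply, T, ι]
    constructor <;> intro h <;> linarith
  · rw [H16, mem_hyp16]
    simp only [Pi.sub_apply, sub_mul, Finset.sum_sub_distrib, sum_single_mul]
    simp only [toPair, φ_apply, T, ι]
    constructor <;> intro h <;> linarith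

/-- The subspace of vectors constant on the classes of `r` (in the `K` coordinates,
after the coordinate change). -/
def E (r : Setoid (K ℓ₁ ℓ₂)) : Submodule ℝ (Coord ℓ₁ ℓ₂ → ℝ) where
  carrier := {w | ∀ ⦃a b⦄, r a b → w (ι a) = w (ι b)}
  add_mem' := fun hu hv a b hab => by simp only [Pi.add_apply, hu hab, hv hab]
  zero_mem' := fun _ _ _ => rfl
  smul_mem' := fun c w hw a b hab => by simp only [Pi.smul_apply, hw hab]

lemma mem_E {r : Setoid (K ℓ₁ ℓ₂)} {w : Coord ℓ₁ ℓ₂ → ℝ} :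
    w ∈ E r ↔ ∀ ⦃a b⦄, r a b → w (ι a) = w (ι b) := Iff.rfl

noncomputable def F (r : Setoid (K ℓ₁ ℓ₂)) : Submodule ℝ (Coord ℓ₁ ℓ₂ → ℝ) :=
  (E r).comap (φ : (Coord ℓ₁ ℓ₂ → ℝ) ≃ₗ[ℝ] _).toLinearMap

lemma mem_F {r : Setoid (K ℓ₁ ℓ₂)} {v : Coord ℓ₁ ℓ₂ → ℝ} :
    v ∈ F r ↔ ∀ ⦃a b⦄, r a b → φ v (ι a) = φ v (ι b) := Iff.rfl




variable {ℓ₁ ℓ₂ : ℕ}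

open Relation

/-- The relation generated by a set of hyperplanes. -/
def RS (S : Finset (Idx16 ℓ₁ ℓ₂)) : K ℓ₁ ℓ₂ → K ℓ₁ ℓ₂ → Prop :=
  fun a b => ∃ idx ∈ S, toPair idx = (a, b)

def genS (S : Finset (Idx16 ℓ₁ ℓ₂)) : Setoid (K ℓ₁ ℓ₂) := EqvGen.setoid (RS S)

lemma inf_H16 (S : Finset (Idx16 ℓ₁ ℓ₂)) :
    ⨅ i ∈ S, H16 ℓ₁ ℓ₂ i = F (genS S) := by
  ext v
  simp only [Submodule.mem_iInf, mem_F]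
  constructor
  · intro h a b hab
    induction hab with
    | rel a b hr => obtain ⟨idx, hidx, hp⟩ := hr
                    have := (mem_H16 idx v).1 (h idx hidx)
                    rw [hp] at this; exact this
    | refl => rfl
    | symm _ _ _ ih => exact ih.symm
    | trans _ _ _ _ _ ih1 ih2 => exact ih1.trans ih2
  · intro h idx hidx
    exact (mem_H16 idx v).2 (h (EqvGen.rel _ _ ⟨idx, hidx, rfl⟩))

open Classical in
lemma genS_surj (r : Setoid (K ℓ₁ ℓ₂)) :
    genS (Finset.univ.filter fun idx => r (toPair idx).1 (toPair idx).2) = r := by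
  apply le_antisymm
  · apply Setoid.eqvGen_le
    intro a b hab
    obtain ⟨idx, hidx, hp⟩ := hab
    simp only [Finset.mem_filter, Finset.mem_univ, true_and] at hidx
    rwa [hp] at hidx
  · rw [Setoid.le_def]
    intro a b hab
    by_cases hne : a = b
    · exact hne ▸ (genS _).refl a
    · obtain ⟨idx, hp | hp⟩ := pair_covered hne
      · exact EqvGen.rel _ _ ⟨idx, by simp [hp, hab], hp⟩
      · exact EqvGen.symm _ _ (EqvGen.rel _ _ ⟨idx, by simp [hp, r.symm' hab], hp⟩)

open scoped Classical in
/-- indicator vector of the class of `a`. -/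
noncomputable def ind (r : Setoid (K ℓ₁ ℓ₂)) (a : K ℓ₁ ℓ₂) : Coord ℓ₁ ℓ₂ → ℝ :=
  fun c => match c with
  | .inl i => if r a (.inl i) then 1 else 0
  | .inr (.inl j) => if r a (.inr j) then 1 else 0
  | .inr (.inr _) => 0

open scoped Classical in
lemma ind_apply (r : Setoid (K ℓ₁ ℓ₂)) (a k : K ℓ₁ ℓ₂) :
    ind r a (ι k) = if r a k then 1 else 0 := by
  rcases k with i | j <;> rfl

lemma ind_mem (r : Setoid (K ℓ₁ ℓ₂)) (a : K ℓ₁ ℓ₂) : ind r a ∈ E r := by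
  classical
  intro k k' hkk'
  rw [ind_apply, ind_apply]
  congr 1
  exact propext ⟨fun h => r.trans' h hkk', fun h => r.trans' h (r.symm' hkk')⟩

lemma E_le_iff {r s : Setoid (K ℓ₁ ℓ₂)} : E r ≤ E s ↔ s ≤ r := by
  constructor
  · intro h
    rw [Setoid.le_def]
    intro a b hab
    classical
    have := h (ind_mem r a) hab
    rw [ind_apply, ind_apply, if_pos (r.refl' a)] at this
    by_contra hc
    rw [if_neg hc] at this
    exact one_ne_zero this
  · intro h w hw a b hab
    exact hw (h hab)

lemma E_inj : Injective (E (ℓ₁ := ℓ₁) (ℓ₂ := ℓ₂)) := fun r s h =>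
  le_antisymm (E_le_iff.1 h.ge) (E_le_iff.1 h.le)

lemma E_bot : E (⊥ : Setoid (K ℓ₁ ℓ₂)) = ⊤ := by
  rw [eq_top_iff]
  intro w _ a b hab
  have : a = b := hab
  rw [this]

lemma F_le_iff {r s : Setoid (K ℓ₁ ℓ₂)} : F r ≤ F s ↔ s ≤ r := by
  rw [F, F, Submodule.comap_le_comap_iff_of_surjective (φ.surjective)]
  exact E_le_iff

lemma F_inj : Injective (F (ℓ₁ := ℓ₁) (ℓ₂ := ℓ₂)) := fun r s h =>
  le_antisymm (F_le_iff.1 h.ge) (F_le_iff.1 h.le)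

lemma F_bot : F (⊥ : Setoid (K ℓ₁ ℓ₂)) = ⊤ := by
  rw [F, E_bot, Submodule.comap_top]

lemma F_eq_top_iff {r : Setoid (K ℓ₁ ℓ₂)} : F r = ⊤ ↔ r = ⊥ := by
  constructor
  · intro h; exact F_inj (h.trans F_bot.symm)
  · rintro rfl; exact F_bot

/-- The parametrization of `E r`. -/
noncomputable def Ψ (r : Setoid (K ℓ₁ ℓ₂)) :
    ((Quotient r → ℝ) × ℝ) →ₗ[ℝ] (Coord ℓ₁ ℓ₂ → ℝ) where
  toFun p := fun c => match c with
    | .inl i => p.1 ⟦Sum.inl i⟧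
    | .inr (.inl j) => p.1 ⟦Sum.inr j⟧
    | .inr (.inr _) => p.2
  map_add' p q := by funext c; rcases c with i | j | u <;> rfl
  map_smul' a p := by funext c; rcases c with i | j | u <;> rfl

lemma Ψ_apply_ι (r : Setoid (K ℓ₁ ℓ₂)) (p : (Quotient r → ℝ) × ℝ) (k : K ℓ₁ ℓ₂) :
    Ψ r p (ι k) = p.1 ⟦k⟧ := by rcases k with i | j <;> rfl

lemma Ψ_inj (r : Setoid (K ℓ₁ ℓ₂)) : Injective (Ψ r) := by
  intro p q h
  have h1 : ∀ k : K ℓ₁ ℓ₂, p.1 ⟦k⟧ = q.1 ⟦k⟧ := by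
    intro k; rw [← Ψ_apply_ι r p k, ← Ψ_apply_ι r q k, h]
  have h2 : p.2 = q.2 := congrFun h zc
  obtain ⟨p1, p2⟩ := p
  obtain ⟨q1, q2⟩ := q
  simp only [Prod.mk.injEq]
  exact ⟨funext fun x => Quotient.inductionOn x h1, h2⟩

lemma Ψ_range (r : Setoid (K ℓ₁ ℓ₂)) : LinearMap.range (Ψ r) = E r := by
  apply le_antisymm
  · rintro w ⟨p, rfl⟩ a b hab
    rw [Ψ_apply_ι, Ψ_apply_ι]
    exact congrArg p.1 (Quotient.sound hab)
  · intro w hw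
    refine ⟨(Quotient.lift (fun k => w (ι k)) (fun a b hab => hw hab), w zc), ?_⟩
    funext c
    rcases c with i | j | u
    · rfl
    · rfl
    · rcases u with ⟨⟩; rfl

lemma F_eq_range (r : Setoid (K ℓ₁ ℓ₂)) :
    F r = LinearMap.range (φ.symm.toLinearMap ∘ₗ Ψ r) := by
  ext v
  rw [mem_F]
  constructor
  · intro h
    have hv : φ v ∈ E r := h
    rw [← Ψ_range] at hv
    obtain ⟨p, hp⟩ := hv
    exact ⟨p, by rw [LinearMap.comp_apply, hp]; exact φ.symm_apply_apply v⟩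
  · rintro ⟨p, rfl⟩
    have : Ψ r p ∈ E r := Ψ_range r ▸ LinearMap.mem_range_self _ p
    intro a b hab
    simpa using this hab

lemma finrank_F (r : Setoid (K ℓ₁ ℓ₂)) :
    Module.finrank ℝ (F r) = Nat.card (Quotient r) + 1 := by
  classical
  have : Fintype (Quotient r) := @Quotient.fintype _ _ r (Classical.decRel _)
  rw [F_eq_range, LinearMap.finrank_range_of_inj
    (fun p q h => Ψ_inj r (φ.symm.injective h))]
  rw [Module.finrank_prod, Module.finrank_pi, Module.finrank_self]
  rw [Nat.card_eq_fintype_card]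



noncomputable instance setoidFintype (α : Type*) [Fintype α] : Fintype (Setoid α) := by
  classical
  exact Fintype.ofInjective
    (fun r (a b : α) => decide (r a b) (h := Classical.propDecidable _))
    (fun r s h => Setoid.ext fun a b => by
      have := congrFun (congrFun h a) b
      exact decide_eq_decide.mp this)

/-- The lift equivalence. -/
def liftEquiv {α β : Type*} (s : Setoid α) :
    {f : α → β // s ≤ Setoid.ker f} ≃ (Quotient s → β) where
  toFun f := Quotient.lift f.1 (fun a b hab => f.2 hab)
  invFun g := ⟨fun a => g ⟦a⟧, fun a b hab => congrArg g (Quotient.sound hab)⟩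
  left_inv f := Subtype.ext rfl
  right_inv g := funext fun q => Quotient.inductionOn q (fun _ => rfl)

lemma descFactorial_cast (m n : ℕ) :
    (m.descFactorial n : ℤ) = ∏ i ∈ Finset.range n, ((m : ℤ) - i) := by
  rcases le_or_gt n m with h | h
  · rw [Nat.descFactorial_eq_prod_range, Nat.cast_prod]
    refine Finset.prod_congr rfl fun i hi => ?_
    rw [Finset.mem_range] at hi
    rw [Nat.cast_sub (le_of_lt (lt_of_lt_of_le hi h))]
  · rw [Nat.descFactorial_eq_zero_iff_lt.2 h, Nat.cast_zero]
    exact (Finset.prod_eq_zero (Finset.mem_range.2 h) (by simp)).symm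

open Classical in
lemma core_count {α : Type*} [Fintype α] (μ' : Setoid α → ℤ)
    (h : ∀ r : Setoid α,
        (∑ s ∈ Finset.univ.filter (fun s => s ≤ r), μ' s) = if r = ⊥ then 1 else 0)
    (m : ℕ) :
    ∑ r : Setoid α, μ' r * (m : ℤ) ^ (Nat.card (Quotient r))
      = (m.descFactorial (Fintype.card α) : ℤ) := by
  have key : ∀ s : Setoid α,
      ((Finset.univ.filter (fun f : α → Fin m => s ≤ Setoid.ker f)).card : ℤ)
        = (m : ℤ) ^ (Nat.card (Quotient s)) := by
    intro s
    have : Fintype (Quotient s) := Quotient.fintype s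
    rw [← Fintype.card_subtype]
    rw [Fintype.card_congr (liftEquiv s (β := Fin m))]
    rw [Fintype.card_fun, Fintype.card_fin, Nat.card_eq_fintype_card]
    push_cast
    rfl
  calc ∑ r : Setoid α, μ' r * (m : ℤ) ^ (Nat.card (Quotient r))
      = ∑ s : Setoid α,
          ∑ f : α → Fin m, (if s ≤ Setoid.ker f then μ' s else 0) := by
        refine Finset.sum_congr rfl fun s _ => ?_
        rw [Finset.sum_ite, Finset.sum_const, Finset.sum_const_zero, add_zero,
          nsmul_eq_mul, ← key s, mul_comm]
    _ = ∑ f : α → Fin m, ∑ s : Setoid α,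
          (if s ≤ Setoid.ker f then μ' s else 0) := Finset.sum_comm
    _ = ∑ f : α → Fin m, (if Setoid.ker f = ⊥ then (1 : ℤ) else 0) := by
        refine Finset.sum_congr rfl fun f _ => ?_
        rw [← Finset.sum_filter, h (Setoid.ker f)]
    _ = ((Finset.univ.filter fun f : α → Fin m => Setoid.ker f = ⊥).card : ℤ) := by
        rw [Finset.sum_boole]
    _ = (m.descFactorial (Fintype.card α) : ℤ) := by
        rw [← Fintype.card_subtype]
        rw [Fintype.card_congr ((Equiv.subtypeEquivRight
          (fun f : α → Fin m => (Setoid.injective_iff_ker_bot f).symm)).trans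
          (Equiv.subtypeInjectiveEquivEmbedding α (Fin m)))]
        rw [Fintype.card_embedding_eq, Fintype.card_fin]

lemma poly_ext {ι : Type*} [Fintype ι] (c : ι → ℤ) (e : ι → ℕ) (n : ℕ)
    (h : ∀ m : ℕ, ∑ i, c i * (m : ℤ) ^ e i = ∏ j ∈ Finset.range n, ((m : ℤ) - j))
    (t : ℤ) :
    ∑ i, c i * t ^ e i = ∏ j ∈ Finset.range n, (t - j) := by
  let p : Polynomial ℤ := ∑ i, Polynomial.C (c i) * Polynomial.X ^ e i
  let q : Polynomial ℤ := ∏ j ∈ Finset.range n, (Polynomial.X - Polynomial.C (j : ℤ))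
  have hev : ∀ x : ℤ, p.eval x = ∑ i, c i * x ^ e i := by
    intro x
    simp [p, Polynomial.eval_finset_sum]
  have hev' : ∀ x : ℤ, q.eval x = ∏ j ∈ Finset.range n, (x - j) := by
    intro x
    simp [q, Polynomial.eval_prod]
  have hpq : p = q := by
    apply Polynomial.eq_of_infinite_eval_eq
    apply Set.Infinite.mono (s := Set.range ((↑) : ℕ → ℤ))
    · rintro x ⟨m, rfl⟩
      simp only [Set.mem_setOf_eq, hev, hev']
      exact h m
    · exact Set.infinite_range_of_injective Nat.cast_injective
  rw [← hev t, ← hev' t, hpq]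



variable {ℓ₁ ℓ₂ : ℕ}

abbrev X (ℓ₁ ℓ₂ : ℕ) := Coord ℓ₁ ℓ₂ → ℝ

def eK : K ℓ₁ ℓ₂ ≃ Fin (ℓ₁ + ℓ₂) := finSumFinEquiv

noncomputable def u (v : X ℓ₁ ℓ₂) : Fin (ℓ₁ + ℓ₂) → ℝ := fun i => φ v (ι (eK.symm i))

lemma mem_Omega_iff {v : X ℓ₁ ℓ₂} :
    (∀ idx : Idx16 ℓ₁ ℓ₂, v ∉ H16 ℓ₁ ℓ₂ idx) ↔ Function.Injective (u v) := by
  constructor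
  · intro h i i' hii'
    by_contra hne
    have hab : eK.symm i ≠ eK.symm i' := fun hh => hne (eK.symm.injective.eq_iff.1 ?_)
    · obtain ⟨idx, hp | hp⟩ := pair_covered hab
      · exact h idx ((mem_H16 idx v).2 (by rw [hp]; exact hii'))
      · exact h idx ((mem_H16 idx v).2 (by rw [hp]; exact hii'.symm))
    · exact hh
  · intro h idx hv
    have := (mem_H16 idx v).1 hv
    have h1 : u v (eK (toPair idx).1) = u v (eK (toPair idx).2) := by
      simpa only [u, Equiv.symm_apply_apply] using this
    exact toPair_ne idx (eK.injective (h h1))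

lemma continuous_phi_apply (c : Coord ℓ₁ ℓ₂) :
    Continuous (fun v : X ℓ₁ ℓ₂ => φ v c) := by
  rcases c with i | j | w
  · exact continuous_apply _
  · exact ((continuous_apply _).neg).sub (continuous_apply _)
  · rcases w with ⟨⟩; exact continuous_apply _

lemma continuous_u (i : Fin (ℓ₁ + ℓ₂)) :
    Continuous (fun v : X ℓ₁ ℓ₂ => u v i) := continuous_phi_apply _

def Cset (σ : Equiv.Perm (Fin (ℓ₁ + ℓ₂))) : Set (X ℓ₁ ℓ₂) :=
  {v | StrictMono (u v ∘ σ)}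

lemma Cset_eq (σ : Equiv.Perm (Fin (ℓ₁ + ℓ₂))) :
    Cset (ℓ₁ := ℓ₁) (ℓ₂ := ℓ₂) σ =
      ⋂ (p : {q : Fin (ℓ₁ + ℓ₂) × Fin (ℓ₁ + ℓ₂) // q.1 < q.2}),
        {v | u v (σ p.1.1) < u v (σ p.1.2)} := by
  ext v
  simp only [Cset, Set.mem_setOf_eq, Set.mem_iInter]
  constructor
  · rintro h ⟨⟨i, j⟩, hij⟩
    exact h hij
  · intro h a b hab
    exact h ⟨(a, b), hab⟩

noncomputable def prC (c : Coord ℓ₁ ℓ₂) : (Coord ℓ₁ ℓ₂ → ℝ) →ₗ[ℝ] ℝ :=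
  LinearMap.proj c

/-- The linear functional `v ↦ φ v c₁ - φ v c₂`. -/
noncomputable def Lfun (c₁ c₂ : Coord ℓ₁ ℓ₂) : X ℓ₁ ℓ₂ →ₗ[ℝ] ℝ :=
  (prC c₁ - prC c₂).comp (φ : X ℓ₁ ℓ₂ ≃ₗ[ℝ] X ℓ₁ ℓ₂).toLinearMap

lemma convex_Cset (σ : Equiv.Perm (Fin (ℓ₁ + ℓ₂))) :
    Convex ℝ (Cset (ℓ₁ := ℓ₁) (ℓ₂ := ℓ₂) σ) := by
  rw [Cset_eq]
  refine convex_iInter fun p => ?_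
  have : {v : X ℓ₁ ℓ₂ | u v (σ p.1.1) < u v (σ p.1.2)}
      = {v : X ℓ₁ ℓ₂ | Lfun (ι (eK.symm (σ p.1.1))) (ι (eK.symm (σ p.1.2))) v < 0} := by
    ext v
    simp only [Set.mem_setOf_eq, Lfun, prC, LinearMap.comp_apply, LinearMap.sub_apply,
      LinearMap.proj_apply, sub_neg]
    rfl
  rw [this]
  exact convex_halfSpace_lt (LinearMap.isLinear _) 0

lemma open_Cset (σ : Equiv.Perm (Fin (ℓ₁ + ℓ₂))) :
    IsOpen (Cset (ℓ₁ := ℓ₁) (ℓ₂ := ℓ₂) σ) := by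
  rw [Cset_eq]
  exact isOpen_iInter_of_finite fun p => isOpen_lt (continuous_u _) (continuous_u _)

lemma Cset_subset {σ : Equiv.Perm (Fin (ℓ₁ + ℓ₂))} {v : X ℓ₁ ℓ₂} (hv : v ∈ Cset σ) :
    Function.Injective (u v) := by
  intro x y hxy
  have h1 : (u v ∘ σ) (σ.symm x) = (u v ∘ σ) (σ.symm y) := by
    simp only [Function.comp_apply, Equiv.apply_symm_apply]; exact hxy
  have := hv.injective h1
  exact σ.symm.injective this

abbrev Omega (ℓ₁ ℓ₂ : ℕ) :=
  {v : Coord ℓ₁ ℓ₂ → ℝ // ∀ i : Idx16 ℓ₁ ℓ₂, v ∉ H16 ℓ₁ ℓ₂ i}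

noncomputable def P : Omega ℓ₁ ℓ₂ → Equiv.Perm (Fin (ℓ₁ + ℓ₂)) := fun v => Tuple.sort (u v.1)

lemma P_eq_iff (v : Omega ℓ₁ ℓ₂) (σ : Equiv.Perm (Fin (ℓ₁ + ℓ₂))) :
    P v = σ ↔ v.1 ∈ Cset σ := by
  have hinj : Function.Injective (u v.1) := mem_Omega_iff.1 v.2
  constructor
  · rintro rfl
    exact (Tuple.monotone_sort (u v.1)).strictMono_of_injective
      (hinj.comp (Equiv.injective _))
  · intro h
    refine (Tuple.eq_sort_iff.2 ⟨h.monotone, fun i j hij hf => ?_⟩).symm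
    exact absurd (σ.injective (hinj hf)) hij.ne

noncomputable def w0 (σ : Equiv.Perm (Fin (ℓ₁ + ℓ₂))) : X ℓ₁ ℓ₂ := fun c =>
  match c with
  | .inl i => (((σ.symm (eK (Sum.inl i))) : ℕ) : ℝ)
  | .inr (.inl j) => (((σ.symm (eK (Sum.inr j))) : ℕ) : ℝ)
  | .inr (.inr _) => 0

noncomputable def vσ (σ : Equiv.Perm (Fin (ℓ₁ + ℓ₂))) : X ℓ₁ ℓ₂ := T (w0 σ)

lemma u_vσ (σ : Equiv.Perm (Fin (ℓ₁ + ℓ₂))) (i : Fin (ℓ₁ + ℓ₂)) :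
    u (vσ σ) i = ((σ.symm i : ℕ) : ℝ) := by
  have hφ : φ (vσ σ) = w0 σ := T_invol (w0 σ)
  rw [u, hφ]
  have : w0 σ (ι (eK.symm i)) = ((σ.symm (eK (eK.symm i)) : ℕ) : ℝ) := by
    rcases h : eK.symm i with k | k <;> rfl
  rw [this, Equiv.apply_symm_apply]

lemma vσ_mem (σ : Equiv.Perm (Fin (ℓ₁ + ℓ₂))) : vσ σ ∈ Cset σ := by
  intro a b hab
  simp only [Function.comp_apply, u_vσ, Equiv.symm_apply_apply]
  exact_mod_cast hab

noncomputable def Ωσ (σ : Equiv.Perm (Fin (ℓ₁ + ℓ₂))) : Omega ℓ₁ ℓ₂ :=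
  ⟨vσ σ, mem_Omega_iff.2 (Cset_subset (vσ_mem σ))⟩

lemma P_Ωσ (σ : Equiv.Perm (Fin (ℓ₁ + ℓ₂))) : P (Ωσ σ) = σ :=
  (P_eq_iff _ _).2 (vσ_mem σ)

lemma fiber_eq (σ : Equiv.Perm (Fin (ℓ₁ + ℓ₂))) :
    {v : Omega ℓ₁ ℓ₂ | P v = σ} = Subtype.val ⁻¹' Cset σ :=
  Set.ext fun v => P_eq_iff v σ

lemma fiber_open (σ : Equiv.Perm (Fin (ℓ₁ + ℓ₂))) :
    IsOpen {v : Omega ℓ₁ ℓ₂ | P v = σ} := by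
  rw [fiber_eq]
  exact (open_Cset σ).preimage continuous_subtype_val

lemma fiber_closed (σ : Equiv.Perm (Fin (ℓ₁ + ℓ₂))) :
    IsClosed {v : Omega ℓ₁ ℓ₂ | P v = σ} := by
  rw [← isOpen_compl_iff]
  have : {v : Omega ℓ₁ ℓ₂ | P v = σ}ᶜ = ⋃ (τ) (_ : τ ≠ σ), {v : Omega ℓ₁ ℓ₂ | P v = τ} := by
    ext v
    simp only [Set.mem_compl_iff, Set.mem_setOf_eq, Set.mem_iUnion]
    exact ⟨fun h => ⟨P v, h, rfl⟩, fun ⟨τ, hτ, hv⟩ => hv ▸ hτ⟩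
  rw [this]
  exact isOpen_iUnion fun τ => isOpen_iUnion fun _ => fiber_open τ

lemma fiber_preconnected (σ : Equiv.Perm (Fin (ℓ₁ + ℓ₂))) :
    IsPreconnected {v : Omega ℓ₁ ℓ₂ | P v = σ} := by
  rw [fiber_eq]
  have himg : Subtype.val '' (Subtype.val ⁻¹' Cset σ : Set (Omega ℓ₁ ℓ₂)) = Cset σ := by
    rw [Set.image_preimage_eq_inter_range, Subtype.range_coe_subtype]
    exact Set.inter_eq_left.2 fun v hv => mem_Omega_iff.2 (Cset_subset hv)
  have hC : IsPreconnected (Subtype.val '' (Subtype.val ⁻¹' Cset σ : Set (Omega ℓ₁ ℓ₂))) := by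
    rw [himg]; exact (convex_Cset σ).isPreconnected
  exact Topology.IsInducing.subtypeVal.isPreconnected_image.mp hC

lemma card_components :
    Nat.card (ConnectedComponents (Omega ℓ₁ ℓ₂)) = (ℓ₁ + ℓ₂).factorial := by
  have hGbij : Function.Bijective
      (fun σ : Equiv.Perm (Fin (ℓ₁ + ℓ₂)) => (ConnectedComponents.mk (Ωσ σ))) := by
    constructor
    · intro σ τ h
      rw [ConnectedComponents.coe_eq_coe] at h
      have h1 : (Ωσ τ : Omega ℓ₁ ℓ₂) ∈ connectedComponent (Ωσ σ) :=
        h ▸ mem_connectedComponent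
      have h2 : connectedComponent (Ωσ σ) ⊆ {v : Omega ℓ₁ ℓ₂ | P v = σ} :=
        isPreconnected_connectedComponent.subset_isClopen
          ⟨fiber_closed σ, fiber_open σ⟩
          ⟨Ωσ σ, mem_connectedComponent, P_Ωσ σ⟩
      have := h2 h1
      rw [Set.mem_setOf_eq, P_Ωσ] at this
      exact this.symm
    · intro x
      obtain ⟨v, rfl⟩ := ConnectedComponents.surjective_coe x
      refine ⟨P v, ?_⟩
      rw [ConnectedComponents.coe_eq_coe]
      have hfib : IsPreconnected {w : Omega ℓ₁ ℓ₂ | P w = P v} := fiber_preconnected _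
      have hsub : {w : Omega ℓ₁ ℓ₂ | P w = P v} ⊆ connectedComponent (Ωσ (P v)) :=
        hfib.subset_connectedComponent (P_Ωσ (P v))
      exact connectedComponent_eq (hsub rfl)
  rw [← Nat.card_eq_of_bijective _ hGbij, Nat.card_eq_fintype_card, Fintype.card_perm,
    Fintype.card_fin]



variable {ℓ₁ ℓ₂ : ℕ}

open Classical in
lemma L16_eq : L16 ℓ₁ ℓ₂ = Finset.image (F (ℓ₁ := ℓ₁) (ℓ₂ := ℓ₂)) Finset.univ := by
  apply Finset.ext
  intro x
  simp only [L16, Finset.mem_image, Finset.mem_univ, true_and]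
  constructor
  · rintro ⟨S, rfl⟩
    exact ⟨genS S, (inf_H16 S).symm⟩
  · rintro ⟨r, rfl⟩
    exact ⟨Finset.univ.filter fun idx => r (toPair idx).1 (toPair idx).2,
      by rw [inf_H16, genS_surj]⟩

open Classical in
lemma charpoly (h₁ : 0 < ℓ₁) (μ : Submodule ℝ (Coord16 ℓ₁ ℓ₂ → ℝ) → ℤ)
    (hμ : ∀ x ∈ L16 ℓ₁ ℓ₂,
      (∑ y ∈ (L16 ℓ₁ ℓ₂).filter (fun y => x ≤ y), μ y) = if x = ⊤ then 1 else 0)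
    (t : ℤ) :
    ∑ x ∈ L16 ℓ₁ ℓ₂, μ x * t ^ (Module.finrank ℝ x) =
      t ^ 2 * ∏ i ∈ Finset.range (ℓ₁ + ℓ₂ - 1), (t - (i + 1 : ℤ)) := by
  have hμ' : ∀ r : Setoid (K ℓ₁ ℓ₂),
      (∑ s ∈ Finset.univ.filter (fun s => s ≤ r), μ (F s)) = if r = ⊥ then 1 else 0 := by
    intro r
    have hmem : F r ∈ L16 ℓ₁ ℓ₂ := by
      rw [L16_eq]; exact Finset.mem_image_of_mem _ (Finset.mem_univ r)
    have h0 := hμ (F r) hmem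
    rw [L16_eq, Finset.filter_image,
      Finset.sum_image (fun a _ b _ h => F_inj h)] at h0
    rw [Finset.filter_congr (fun s _ => F_le_iff (r := r) (s := s))] at h0
    rwa [if_congr F_eq_top_iff rfl rfl] at h0
  have hcard : Fintype.card (K ℓ₁ ℓ₂) = ℓ₁ + ℓ₂ := by simp
  have hpoly := poly_ext (fun r => μ (F r))
    (fun r : Setoid (K ℓ₁ ℓ₂) => Nat.card (Quotient r)) (ℓ₁ + ℓ₂)
    (fun m => by rw [core_count _ hμ' m, hcard, descFactorial_cast]) t
  have hsum : ∑ x ∈ L16 ℓ₁ ℓ₂, μ x * t ^ (Module.finrank ℝ x)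
      = ∑ r : Setoid (K ℓ₁ ℓ₂), μ (F r) * t ^ (Nat.card (Quotient r) + 1) := by
    rw [L16_eq, Finset.sum_image (fun a _ b _ h => F_inj h)]
    exact Finset.sum_congr rfl fun r _ => by rw [finrank_F]
  rw [hsum]
  have hstep : ∑ r : Setoid (K ℓ₁ ℓ₂), μ (F r) * t ^ (Nat.card (Quotient r) + 1)
      = (∑ r : Setoid (K ℓ₁ ℓ₂), μ (F r) * t ^ (Nat.card (Quotient r))) * t := by
    rw [Finset.sum_mul]
    exact Finset.sum_congr rfl fun r _ => by rw [pow_succ]; ring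
  rw [hstep, hpoly]
  have hn : ℓ₁ + ℓ₂ = (ℓ₁ + ℓ₂ - 1) + 1 := by omega
  rw [hn, Finset.prod_range_succ']
  push_cast
  ring

end ER16

open Classical in
theorem stmt_16 (ℓ₁ ℓ₂ : ℕ) (h₁ : 0 < ℓ₁) (h₂ : 0 < ℓ₂)
    (μ : Submodule ℝ (Coord16 ℓ₁ ℓ₂ → ℝ) → ℤ)
    (hμ : ∀ x ∈ L16 ℓ₁ ℓ₂,
      (∑ y ∈ (L16 ℓ₁ ℓ₂).filter (fun y => x ≤ y), μ y) = if x = ⊤ then 1 else 0) :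
    (∀ t : ℤ,
      ∑ x ∈ L16 ℓ₁ ℓ₂, μ x * t ^ (Module.finrank ℝ x) =
        t ^ 2 * ∏ i ∈ Finset.range (ℓ₁ + ℓ₂ - 1), (t - (i + 1 : ℤ))) ∧
    Nat.card (ConnectedComponents
        {v : Coord16 ℓ₁ ℓ₂ → ℝ // ∀ i : Idx16 ℓ₁ ℓ₂, v ∉ H16 ℓ₁ ℓ₂ i}) =
      (ℓ₁ + ℓ₂).factorial :=
  ⟨fun t => ER16.charpoly h₁ μ hμ t, ER16.card_components⟩
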